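/- Let k, l be nonzero integers with k ≠ l, and η, ξ, t real. Then (ηl − kξ)² ≤ |(η − kt)(η − ξ − (k − l)t)|·l² + |η − kt|·|ξ − lt|·|(k,l)|·|k − l| + |ξ − lt|·|η − ξ − (k − l)t|·k², where |(k,l)| denotes max(|k|,|l|) (or the Euclidean norm of (k,l), up to constant). -/
import Mathlib


theorem stmt_9 (k l : ℤ) (hk : k ≠ 0) (hl : l ≠ 0) (hkl : k ≠ l) (η ξ t : ℝ) :
    (η * (l : ℝ) - (k : ℝ) * ξ) ^ 2 ≤
      |(η - k * t) * (η - ξ - ((k : ℝ) - l) * t)| * (l : ℝ) ^ 2 +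
      |η - (k : ℝ) * t| * |ξ - (l : ℝ) * t| * (2 * max |(k : ℝ)| |(l : ℝ)|) * |(k : ℝ) - l| +
      |ξ - (l : ℝ) * t| * |η - ξ - ((k : ℝ) - l) * t| * (k : ℝ) ^ 2 := by
  set K : ℝ := (k : ℝ) with hK
  set L : ℝ := (l : ℝ) with hL
  set A : ℝ := η - K * t with hA
  set B : ℝ := ξ - L * t with hB
  have hC : η - ξ - (K - L) * t = A - B := by rw [hA, hB]; ring
  have hmax : |K - L| ≤ 2 * max |K| |L| := by
    have h1 := le_max_left |K| |L|
    have h2 := le_max_right |K| |L|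
    have := abs_sub K L
    linarith
  have key : (η * L - K * ξ) ^ 2
      = A * (A - B) * L ^ 2 + (K - L) ^ 2 * (A * B) - K ^ 2 * (B * (A - B)) := by
    rw [hA, hB]; ring
  rw [hC, key]
  have t1 : A * (A - B) * L ^ 2 ≤ |A * (A - B)| * L ^ 2 :=
    mul_le_mul_of_nonneg_right (le_abs_self _) (sq_nonneg _)
  have t2 : (K - L) ^ 2 * (A * B) ≤ |A| * |B| * (2 * max |K| |L|) * |K - L| := by
    calc (K - L) ^ 2 * (A * B) ≤ (K - L) ^ 2 * (|A| * |B|) := by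
          apply mul_le_mul_of_nonneg_left _ (sq_nonneg _)
          calc A * B ≤ |A * B| := le_abs_self _
          _ = |A| * |B| := abs_mul A B
      _ = |K - L| * |K - L| * (|A| * |B|) := by rw [← sq_abs]; ring
      _ ≤ (2 * max |K| |L|) * |K - L| * (|A| * |B|) := by
          apply mul_le_mul_of_nonneg_right
            (mul_le_mul_of_nonneg_right hmax (abs_nonneg _)) (by positivity)
      _ = |A| * |B| * (2 * max |K| |L|) * |K - L| := by ring
  have t3 : -(K ^ 2 * (B * (A - B))) ≤ |B| * |A - B| * K ^ 2 := by
    have : -(B * (A - B)) ≤ |B| * |A - B| := by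
      rw [← abs_mul]; exact neg_le_abs _
    nlinarith [sq_nonneg K]
  linarith
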